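/- (Lundell–McCullough floor bound) Let G = K + C = A + B + Z with Z >= 0, L(A+Z) = L(A), and L(B+Z) = L(B). Then for D disjoint from Z, the minimum distance of C_Ω(D,G) is at least deg C + deg Z. -/

import Mathlib

noncomputable section

/-- Degree of a divisor, where divisors on the curve are modeled as finitely
supported integer valued functions on the set of rational points. -/
def degr {Point : Type*} (D : Point →₀ ℤ) : ℤ := D.sum fun _ n => n

/-- An abstract model of a smooth projective absolutely irreducible curve over a field,
recording the data used in the paper: the dimension `l D` of the Riemann-Roch space
`L(D)`, the genus `g`, a canonical divisor `K`, and linear equivalence `lin`,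
together with their basic properties (Riemann-Roch, monotonicity, semigroup
properties of nongaps, etc.). -/
structure Curve (Point : Type*) where
  /-- `l D = dim L(D)` -/
  l : (Point →₀ ℤ) → ℕ
  /-- the genus -/
  g : ℕ
  /-- a canonical divisor -/
  K : Point →₀ ℤ
  /-- linear equivalence of divisors -/
  lin : (Point →₀ ℤ) → (Point →₀ ℤ) → Prop
  lin_refl : ∀ A, lin A A
  lin_symm : ∀ {A B}, lin A B → lin B A
  lin_trans : ∀ {A B C}, lin A B → lin B C → lin A C
  lin_add : ∀ {A B} (E : Point →₀ ℤ), lin A B → lin (A + E) (B + E)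
  deg_lin : ∀ {A B}, lin A B → degr A = degr B
  l_lin : ∀ {A B}, lin A B → l A = l B
  l_zero : l 0 = 1
  l_neg : ∀ {D}, degr D < 0 → l D = 0
  l_mono : ∀ (D : Point →₀ ℤ) (P : Point), l D ≤ l (D + Finsupp.single P 1)
  l_step : ∀ (D : Point →₀ ℤ) (P : Point), l (D + Finsupp.single P 1) ≤ l D + 1
  /-- Riemann-Roch -/
  rr : ∀ D : Point →₀ ℤ, (l D : ℤ) - l (K - D) = degr D + 1 - g
  lin_of_deg_zero : ∀ {D}, l D ≠ 0 → degr D = 0 → lin D 0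
  /-- the semigroup property of `Γ_P` -/
  gamma_add : ∀ (P : Point) {A B}, l A ≠ l (A - Finsupp.single P 1) →
      l B ≠ l (B - Finsupp.single P 1) → l (A + B) ≠ l (A + B - Finsupp.single P 1)
  eff_add : ∀ {A B}, l A ≠ 0 → l B ≠ 0 → l (A + B) ≠ 0
  point_nongap : ∀ {P Q : Point}, P ≠ Q →
      l (Finsupp.single P 1) ≠ l (Finsupp.single P 1 - Finsupp.single Q 1)

variable {Point : Type*}

/-- `Γ_P` : divisor (classes) with no base point at `P`, i.e. `L(A) ≠ L(A-P)`. -/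
def GammaP (X : Curve Point) (P : Point) : Set (Point →₀ ℤ) :=
  {A | X.l A ≠ X.l (A - Finsupp.single P 1)}

/-- `Γ_S = ∩_{P ∈ S} Γ_P`, with the convention `Γ_∅ = Γ = {A : L(A) ≠ 0}`. -/
def GammaS (X : Curve Point) (S : Finset Point) : Set (Point →₀ ℤ) :=
  {A | (S = ∅ → X.l A ≠ 0) ∧ ∀ P ∈ S, A ∈ GammaP X P}

/-- `Γ(C; S, S') = {A : A ∈ Γ_S and A - C ∈ Γ_{S'}}`. -/
def GammaSet (X : Curve Point) (C : Point →₀ ℤ) (S S' : Finset Point) :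
    Set (Point →₀ ℤ) :=
  {A | A ∈ GammaS X S ∧ A - C ∈ GammaS X S'}

/-- `γ(C; S, S') = min {deg A : A ∈ Γ(C; S, S')}`. -/
def gammaMin (X : Curve Point) (C : Point →₀ ℤ) (S S' : Finset Point) : ℤ :=
  sInf (degr '' GammaSet X C S S')

/-- `Δ = {i : A_i ∈ Γ_{P_i} and A_i - C ∉ Γ_{P_i}}` for indices `1 ≤ i ≤ n`. -/
def Delta (X : Curve Point) (C : Point →₀ ℤ) (n : ℕ) (A : ℕ → Point →₀ ℤ)
    (P : ℕ → Point) : Set ℕ :=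
  {i | 1 ≤ i ∧ i ≤ n ∧ A i ∈ GammaP X (P i) ∧ A i - C ∉ GammaP X (P i)}

/-- `Δ' = {i : A_i ∉ Γ_{P_i} and A_i - C ∈ Γ_{P_i}}` for indices `1 ≤ i ≤ n`. -/
def Delta' (X : Curve Point) (C : Point →₀ ℤ) (n : ℕ) (A : ℕ → Point →₀ ℤ)
    (P : ℕ → Point) : Set ℕ :=
  {i | 1 ≤ i ∧ i ≤ n ∧ A i ∉ GammaP X (P i) ∧ A i - C ∈ GammaP X (P i)}

/-! ### Auxiliary lemmas -/

lemma degr_zero : degr (0 : Point →₀ ℤ) = 0 := by simp [degr]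

lemma degr_add (A B : Point →₀ ℤ) : degr (A + B) = degr A + degr B := by
  simpa [degr] using Finsupp.sum_add_index' (f := A) (g := B)
    (h := fun _ n => n) (fun _ => rfl) (fun _ _ _ => rfl)

lemma degr_single (P : Point) (n : ℤ) : degr (Finsupp.single P n) = n := by
  simp [degr, Finsupp.sum_single_index]

lemma degr_neg (A : Point →₀ ℤ) : degr (-A) = - degr A := by
  have h := degr_add A (-A)
  simp only [add_neg_cancel, degr_zero] at h
  linarith

lemma degr_sub (A B : Point →₀ ℤ) : degr (A - B) = degr A - degr B := by
  rw [sub_eq_add_neg, degr_add, degr_neg]; ring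

lemma degr_nonneg {Z : Point →₀ ℤ} (hZ : 0 ≤ Z) : 0 ≤ degr Z := by
  refine Finset.sum_nonneg fun a _ => ?_
  exact Finsupp.le_def.mp hZ a

lemma eff_eq_zero {Z : Point →₀ ℤ} (hZ : 0 ≤ Z) (hd : degr Z = 0) : Z = 0 := by
  have h := (Finset.sum_eq_zero_iff_of_nonneg
    (fun a _ => Finsupp.le_def.mp hZ a)).mp hd
  ext a
  by_cases ha : a ∈ Z.support
  · exact h a ha
  · simpa using Finsupp.notMem_support_iff.mp ha

lemma eff_decomp {Z : Point →₀ ℤ} (hZ : 0 ≤ Z) (hne : Z ≠ 0) :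
    ∃ (P : Point) (Z' : Point →₀ ℤ), 0 ≤ Z' ∧ Z = Z' + Finsupp.single P 1 ∧
      degr Z' + 1 = degr Z := by
  obtain ⟨P, hP⟩ := Finsupp.support_nonempty_iff.mpr hne
  have hP1 : 1 ≤ Z P := by
    have h0 : Z P ≠ 0 := Finsupp.mem_support_iff.mp hP
    have h1 : 0 ≤ Z P := Finsupp.le_def.mp hZ P
    omega
  refine ⟨P, Z - Finsupp.single P 1, ?_, by abel, ?_⟩
  · intro a
    simp only [Finsupp.coe_zero, Pi.zero_apply, Finsupp.sub_apply]
    rcases eq_or_ne a P with rfl | hne'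
    · rw [Finsupp.single_eq_same]; omega
    · rw [Finsupp.single_eq_of_ne' (Ne.symm hne')]
      have := Finsupp.le_def.mp hZ a
      simp only [Finsupp.coe_zero, Pi.zero_apply] at this
      omega
  · rw [degr_sub, degr_single]; ring

lemma eff_induction (M : (Point →₀ ℤ) → Prop) (h0 : M 0)
    (hstep : ∀ Z P, 0 ≤ Z → M Z → M (Z + Finsupp.single P 1)) :
    ∀ Z : Point →₀ ℤ, 0 ≤ Z → M Z := by
  have key : ∀ n : ℕ, ∀ Z : Point →₀ ℤ, 0 ≤ Z → degr Z = n → M Z := by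
    intro n
    induction n with
    | zero => intro Z hZ hd; rw [eff_eq_zero hZ (by exact_mod_cast hd)]; exact h0
    | succ n ih =>
      intro Z hZ hd
      have hne : Z ≠ 0 := by
        rintro rfl; rw [degr_zero] at hd; omega
      obtain ⟨P, Z', hZ', hsum, hdeg⟩ := eff_decomp hZ hne
      rw [hsum]
      refine hstep Z' P hZ' (ih Z' hZ' ?_)
      push_cast at hd ⊢; omega
  intro Z hZ
  have h := degr_nonneg hZ
  exact key (degr Z).toNat Z hZ (by omega)

lemma support_mono_eff {Z W : Point →₀ ℤ} (hZ : 0 ≤ Z) (hW : 0 ≤ W) :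
    Z.support ⊆ (Z + W).support := by
  intro a ha
  have h1 : 0 < Z a :=
    lt_of_le_of_ne (Finsupp.le_def.mp hZ a) (Ne.symm (Finsupp.mem_support_iff.mp ha))
  have h2 : 0 ≤ W a := Finsupp.le_def.mp hW a
  refine Finsupp.mem_support_iff.mpr ?_
  rw [Finsupp.add_apply]
  omega

lemma mem_support_add_single {Z : Point →₀ ℤ} (hZ : 0 ≤ Z) (Q : Point) :
    Q ∈ (Z + Finsupp.single Q 1).support := by
  have h1 : 0 ≤ Z Q := Finsupp.le_def.mp hZ Q
  refine Finsupp.mem_support_iff.mpr ?_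
  rw [Finsupp.add_apply, Finsupp.single_eq_same]
  omega

lemma l_mono_eff (X : Curve Point) {E : Point →₀ ℤ} (hE : 0 ≤ E) :
    ∀ W, X.l W ≤ X.l (W + E) := by
  refine eff_induction (fun E => ∀ W, X.l W ≤ X.l (W + E)) (fun W => by simp) ?_ E hE
  intro Z P _ ih W
  calc X.l W ≤ X.l (W + Z) := ih W
    _ ≤ X.l (W + Z + Finsupp.single P 1) := X.l_mono _ P
    _ = X.l (W + (Z + Finsupp.single P 1)) := by rw [add_assoc]

lemma l_add_le_eff (X : Curve Point) {E : Point →₀ ℤ} (hE : 0 ≤ E) :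
    ∀ W, (X.l (W + E) : ℤ) ≤ (X.l W : ℤ) + degr E := by
  refine eff_induction (fun E => ∀ W, (X.l (W + E) : ℤ) ≤ (X.l W : ℤ) + degr E)
    (fun W => by simp [degr_zero]) ?_ E hE
  intro Z P _ ih W
  have h1 : X.l (W + Z + Finsupp.single P 1) ≤ X.l (W + Z) + 1 := X.l_step _ P
  have h2 := ih W
  rw [← add_assoc, degr_add, degr_single]
  linarith

/-- Single-point floor step: if `A + Q` has a base point at `Q`, so does
`A + Q - P` for `P ≠ Q`, via `gamma_add` and `point_nongap`. -/
lemma floor_step0 (X : Curve Point) (A : Point →₀ ℤ) {P Q : Point} (hPQ : P ≠ Q)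
    (h : X.l (A + Finsupp.single Q 1) = X.l A) :
    X.l (A + Finsupp.single Q 1 - Finsupp.single P 1)
      = X.l (A - Finsupp.single P 1) := by
  by_contra hne
  have h1 : X.l (A + Finsupp.single Q 1 - Finsupp.single P 1)
      ≠ X.l (A + Finsupp.single Q 1 - Finsupp.single P 1 - Finsupp.single Q 1) := by
    have e : A + Finsupp.single Q 1 - Finsupp.single P 1 - Finsupp.single Q 1
        = A - Finsupp.single P 1 := by abel
    rw [e]; exact hne
  have h2 := X.point_nongap hPQ
  have h3 := X.gamma_add Q h1 h2
  have e1 : A + Finsupp.single Q 1 - Finsupp.single P 1 + Finsupp.single P 1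
      = A + Finsupp.single Q 1 := by abel
  rw [e1] at h3
  have e2 : A + Finsupp.single Q 1 - Finsupp.single Q 1 = A := by abel
  rw [e2] at h3
  exact h3 h

lemma floor_step_point (X : Curve Point) (P : Point) :
    ∀ Z : Point →₀ ℤ, 0 ≤ Z → ∀ A : Point →₀ ℤ, P ∉ Z.support →
      X.l (A + Z) = X.l A →
      X.l (A + Z - Finsupp.single P 1) = X.l (A - Finsupp.single P 1) := by
  refine eff_induction (fun Z => ∀ A : Point →₀ ℤ, P ∉ Z.support →
      X.l (A + Z) = X.l A →
      X.l (A + Z - Finsupp.single P 1) = X.l (A - Finsupp.single P 1))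
    (fun A _ _ => by simp) ?_
  intro Z Q hZ ih A hPsup h
  have hsingle : (0 : Point →₀ ℤ) ≤ Finsupp.single Q 1 := by
    rw [Finsupp.single_nonneg]; norm_num
  have hQmem : Q ∈ (Z + Finsupp.single Q 1).support := mem_support_add_single hZ Q
  have hPQ : P ≠ Q := fun e => hPsup (e ▸ hQmem)
  have hPZ : P ∉ Z.support := fun hp => hPsup (support_mono_eff hZ hsingle hp)
  have easc : A + (Z + Finsupp.single Q 1) = A + Z + Finsupp.single Q 1 :=
    (add_assoc _ _ _).symm
  rw [easc] at h ⊢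
  have m1 : X.l A ≤ X.l (A + Z) := l_mono_eff X hZ A
  have m2 : X.l (A + Z) ≤ X.l (A + Z + Finsupp.single Q 1) :=
    X.l_mono _ Q
  have hAZ : X.l (A + Z) = X.l A := by omega
  have hTop : X.l (A + Z + Finsupp.single Q 1) = X.l (A + Z) := by omega
  have h0 := floor_step0 X (A + Z) hPQ hTop
  rw [h0]
  exact ih A hPZ hAZ

lemma floor_sub (X : Curve Point) :
    ∀ D' : Point →₀ ℤ, 0 ≤ D' → ∀ A Z : Point →₀ ℤ, 0 ≤ Z →
      (∀ P ∈ D'.support, P ∉ Z.support) →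
      X.l (A + Z) = X.l A → X.l (A + Z - D') = X.l (A - D') := by
  refine eff_induction (fun D' => ∀ A Z : Point →₀ ℤ, 0 ≤ Z →
      (∀ P ∈ D'.support, P ∉ Z.support) →
      X.l (A + Z) = X.l A → X.l (A + Z - D') = X.l (A - D'))
    (fun A Z _ _ h => by simpa using h) ?_
  intro D₀ P hD₀ ih A Z hZ hdisj h
  have hsingle : (0 : Point →₀ ℤ) ≤ Finsupp.single P 1 := by
    rw [Finsupp.single_nonneg]; norm_num
  have hPmem : P ∈ (D₀ + Finsupp.single P 1).support := mem_support_add_single hD₀ P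
  have h1 := floor_step_point X P Z hZ A (hdisj P hPmem) h
  have e1 : A + Z - Finsupp.single P 1 = (A - Finsupp.single P 1) + Z := by abel
  rw [e1] at h1
  have h2 := ih (A - Finsupp.single P 1) Z hZ
    (fun Q hQ => hdisj Q (support_mono_eff hD₀ hsingle hQ)) h1
  have e2 : A - Finsupp.single P 1 + Z - D₀ = A + Z - (D₀ + Finsupp.single P 1) := by abel
  have e3 : A - Finsupp.single P 1 - D₀ = A - (D₀ + Finsupp.single P 1) := by abel
  rwa [e2, e3] at h2

/-- (Lundell–McCullough floor bound) Let `G = K + C = A + B + Z` with `Z ≥ 0`,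
`L(A+Z) = L(A)` and `L(B+Z) = L(B)`.  For `D` (a set of distinct rational points)
disjoint from the support of `Z`, the minimum distance of the residue code `C_Ω(D,G)`
is at least `deg C + deg Z`.  The residue code is modeled abstractly via the defining
support property of its nonzero codewords. -/
theorem lundell_mccullough_bound (X : Curve Point) {F : Type*} [Field F] [DecidableEq F]
    {n : ℕ} (Code : Submodule F (Fin n → F)) (D : Finset Point)
    (G C A B Z : Point →₀ ℤ)
    (hG : G = X.K + C) (hdec : G = A + B + Z) (hZ : 0 ≤ Z)
    (hAZ : X.l (A + Z) = X.l A) (hBZ : X.l (B + Z) = X.l B)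
    (hDZ : ∀ P ∈ D, P ∉ Z.support)
    (hcode : ∀ c ∈ Code, c ≠ 0 → ∃ D' E : Point →₀ ℤ,
      0 ≤ D' ∧ (∀ Q, D' Q ≤ 1) ∧ D'.support ⊆ D ∧
      0 ≤ E ∧ Disjoint E.support D'.support ∧
      X.lin X.K (G - D' + E) ∧ degr D' = (hammingNorm c : ℤ)) :
    ∀ c ∈ Code, c ≠ 0 → degr C + degr Z ≤ (hammingNorm c : ℤ) := by
  intro c hc hc0
  obtain ⟨D', E, hD'0, _, hD'sub, hE0, _, hlin, hdeg⟩ := hcode c hc hc0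
  -- degree bookkeeping: deg D' = deg C + deg E
  have hdegK := X.deg_lin hlin
  have hdegG : degr G = degr X.K + degr C := by rw [hG, degr_add]
  have hdegGDE : degr (G - D' + E) = degr G - degr D' + degr E := by
    rw [degr_add, degr_sub]
  have hE_eq : degr D' = degr C + degr E := by
    rw [hdegGDE, hdegG] at hdegK; linarith
  -- linear equivalences K - B ~ A + Z + E - D', K - B - Z ~ A + E - D'
  have lin1 : X.lin (X.K - B) (A + Z + E - D') := by
    have h := X.lin_add (-B) hlin
    have e1 : X.K + -B = X.K - B := (sub_eq_add_neg _ _).symm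
    have e2 : G - D' + E + -B = A + Z + E - D' := by rw [hdec]; abel
    rwa [e1, e2] at h
  have lin2 : X.lin (X.K - B - Z) (A + E - D') := by
    have h := X.lin_add (-B - Z) hlin
    have e1 : X.K + (-B - Z) = X.K - B - Z := by abel
    have e2 : G - D' + E + (-B - Z) = A + E - D' := by rw [hdec]; abel
    rwa [e1, e2] at h
  -- Riemann-Roch gives full jumps: l(K-B) - l(K-B-Z) = deg Z
  have rr1 := X.rr B
  have rr2 := X.rr (B + Z)
  have eK : X.K - (B + Z) = X.K - B - Z := by abel
  rw [eK, degr_add, hBZ] at rr2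
  have key : (X.l (X.K - B) : ℤ) - X.l (X.K - B - Z) = degr Z := by linarith
  have lA := X.l_lin lin1
  have lB := X.l_lin lin2
  rw [lA, lB] at key
  -- the chain of inequalities
  have c1 : (X.l (A + Z + E - D') : ℤ) ≤ (X.l (A + Z - D') : ℤ) + degr E := by
    have e : A + Z + E - D' = (A + Z - D') + E := by abel
    rw [e]; exact l_add_le_eff X hE0 _
  have c2 : X.l (A + Z - D') = X.l (A - D') :=
    floor_sub X D' hD'0 A Z hZ (fun P hP => hDZ P (hD'sub hP)) hAZ
  have c3 : X.l (A - D') ≤ X.l (A + E - D') := by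
    have e : A + E - D' = (A - D') + E := by abel
    rw [e]; exact l_mono_eff X hE0 _
  have hZE : degr Z ≤ degr E := by
    rw [c2] at c1
    have c3' : (X.l (A - D') : ℤ) ≤ (X.l (A + E - D') : ℤ) := by exact_mod_cast c3
    linarith
  linarith [hdeg, hE_eq, hZE]
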